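/- Let γ be a C² regular curve in E(1,1) with ω(γ̇(t)) = −(√2/2)(e^{−γ₃}γ̇₁ + e^{γ₃}γ̇₂) ≠ 0 at a point t. Then the curvature k^L_γ with respect to g_L satisfies lim_{L→∞} k^L_γ(t) = √((1/2)(−e^{−γ₃}γ̇₁ + e^{γ₃}γ̇₂)² + γ̇₃²) / |ω(γ̇(t))|. -/

import Mathlib

open Filter

/-- Lemma 5.3 (5.5) of the paper.  Let `γ` be a `C²` regular curve in `E(1,1)` with,
at a fixed point `t`, third coordinate `g3`, derivatives `d1,d2,d3`, second derivatives
`dd1,dd2,dd3`, `w = ω(γ̇(t)) = -(√2/2)(e^{-γ₃}γ̇₁ + e^{γ₃}γ̇₂) ≠ 0`, and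
`w' = (d/dt)ω(γ̇(t))`.  With frame components `a = γ̇₃`, `b = (√2/2)(-e^{-γ₃}γ̇₁+e^{γ₃}γ̇₂)`,
`c = w` of `γ̇` and components `A L, B L, C L` of `∇^L_{γ̇}γ̇` (Lemma 5.3), the curvature
`k^L_γ` with respect to `g_L` satisfies
`lim_{L→∞} k^L_γ = √((1/2)(-e^{-γ₃}γ̇₁+e^{γ₃}γ̇₂)² + γ̇₃²)/|w|`. -/
theorem e11_curvature_limit_nonhorizontal
    (g3 d1 d2 d3 dd1 dd2 dd3 w w' : ℝ)
    (hw : w = -(Real.sqrt 2 / 2) * (Real.exp (-g3) * d1 + Real.exp g3 * d2))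
    (hreg : ¬(d1 = 0 ∧ d2 = 0 ∧ d3 = 0))
    (hw0 : w ≠ 0)
    (a b : ℝ) (ha : a = d3)
    (hb : b = (Real.sqrt 2 / 2) * (-Real.exp (-g3) * d1 + Real.exp g3 * d2))
    (A B C : ℝ → ℝ)
    (hA : ∀ L : ℝ, A L = dd3 + (Real.sqrt 2 / 2) * (L + 1)
        * (-Real.exp (-g3) * d1 + Real.exp g3 * d2) * w)
    (hB : ∀ L : ℝ, B L = (Real.sqrt 2 / 2)
        * (dd2 * Real.exp g3 + d2 * d3 * Real.exp g3
            - dd1 * Real.exp (-g3) + d1 * d3 * Real.exp (-g3)) - L * w * d3)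
    (hC : ∀ L : ℝ, C L = w' - (Real.sqrt 2 / (2 * L))
        * (-Real.exp (-g3) * d1 + Real.exp g3 * d2) * d3) :
    Tendsto (fun L : ℝ =>
        Real.sqrt ((A L ^ 2 + B L ^ 2 + L * C L ^ 2) / (a ^ 2 + b ^ 2 + L * w ^ 2) ^ 2
          - (A L * a + B L * b + L * C L * w) ^ 2 / (a ^ 2 + b ^ 2 + L * w ^ 2) ^ 3))
      atTop (nhds (Real.sqrt ((1 / 2) * (-Real.exp (-g3) * d1 + Real.exp g3 * d2) ^ 2
          + d3 ^ 2) / |w|)) := by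
  have h2 : Real.sqrt 2 * Real.sqrt 2 = 2 := Real.mul_self_sqrt (by norm_num)
  have hw2 : w ^ 2 ≠ 0 := pow_ne_zero _ hw0
  set P : ℝ := (Real.sqrt 2 / 2) * (dd2 * Real.exp g3 + d2 * d3 * Real.exp g3
      - dd1 * Real.exp (-g3) + d1 * d3 * Real.exp (-g3)) with hP
  have hA' : ∀ L : ℝ, A L = dd3 + (L + 1) * b * w := by
    intro L; rw [hA L, hb]; ring
  have hB' : ∀ L : ℝ, B L = P - L * w * a := by
    intro L; rw [hB L, hP, ha]
  have hC' : ∀ L : ℝ, L ≠ 0 → C L = w' - a * b * L⁻¹ := by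
    intro L hL; rw [hC L, ha, hb]; field_simp
  set g : ℝ → ℝ := fun u =>
    (((dd3 + b * w) * u + b * w) ^ 2 + (P * u - w * a) ^ 2 + u * (w' - a * b * u) ^ 2)
        / ((a ^ 2 + b ^ 2) * u + w ^ 2) ^ 2
      - u * ((a * dd3 + P * b) * u + w * w') ^ 2 / ((a ^ 2 + b ^ 2) * u + w ^ 2) ^ 3
    with hg
  have hden : ∀ u : ℝ, 0 ≤ u → (a ^ 2 + b ^ 2) * u + w ^ 2 ≠ 0 := by
    intro u hu
    have : 0 < (a ^ 2 + b ^ 2) * u + w ^ 2 :=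
      add_pos_of_nonneg_of_pos (mul_nonneg (by positivity) hu) (by positivity)
    exact ne_of_gt this
  have hc : ContinuousAt g 0 := by
    apply ContinuousAt.sub
    · exact ContinuousAt.div (by fun_prop) (by fun_prop)
        (by simpa using pow_ne_zero 2 (hden 0 le_rfl))
    · exact ContinuousAt.div (by fun_prop) (by fun_prop)
        (by simpa using pow_ne_zero 3 (hden 0 le_rfl))
  have hlim : Tendsto (fun L : ℝ => g L⁻¹) atTop (nhds (g 0)) :=
    hc.tendsto.comp tendsto_inv_atTop_zero
  have hg0 : g 0 = (a ^ 2 + b ^ 2) / w ^ 2 := by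
    rw [hg]; field_simp; ring
  have heq : (fun L : ℝ =>
      (A L ^ 2 + B L ^ 2 + L * C L ^ 2) / (a ^ 2 + b ^ 2 + L * w ^ 2) ^ 2
        - (A L * a + B L * b + L * C L * w) ^ 2 / (a ^ 2 + b ^ 2 + L * w ^ 2) ^ 3)
      =ᶠ[atTop] (fun L : ℝ => g L⁻¹) := by
    filter_upwards [eventually_gt_atTop (0 : ℝ)] with L hL
    have hL0 : L ≠ 0 := ne_of_gt hL
    have hN : a ^ 2 + b ^ 2 + L * w ^ 2 ≠ 0 := by positivity
    have hM : (a ^ 2 + b ^ 2) * L⁻¹ + w ^ 2 ≠ 0 := hden _ (by positivity)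
    rw [hA' L, hB' L, hC' L hL0, hg]
    field_simp
    ring
  have hsq : (Real.sqrt 2 / 2) ^ 2 = 1 / 2 := by
    rw [div_pow, sq, h2]; norm_num
  have hab : a ^ 2 + b ^ 2
      = (1 / 2) * (-Real.exp (-g3) * d1 + Real.exp g3 * d2) ^ 2 + d3 ^ 2 := by
    rw [ha, hb, mul_pow, hsq]; ring
  have hval : Real.sqrt ((a ^ 2 + b ^ 2) / w ^ 2)
      = Real.sqrt ((1 / 2) * (-Real.exp (-g3) * d1 + Real.exp g3 * d2) ^ 2 + d3 ^ 2)
        / |w| := by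
    rw [hab, Real.sqrt_div (by positivity), Real.sqrt_sq_eq_abs]
  have := (hlim.congr' heq.symm).sqrt
  rw [hg0, hval] at this
  exact this
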